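/- Let V be a Banach space densely and continuously embedded in a Banach space E, P a metric space, and {A^{(μ)}(t)}_{t≥0}, μ∈P, families satisfying the hyperbolic conditions (Hyp1)–(Hyp3) with constants M, ω, M_V, ω_V independent of μ. Assume furthermore that for each μ∈P there is a generator Â^{(μ)} of a C₀ semigroup {Ŝ^{(μ)}(t)}_{t≥0} on E such that V is Â^{(μ)}-admissible, V ⊂ D(Â^{(μ)}), and lim_{T→+∞, ν→μ} (1/T)∫₀^T ‖A^{(ν)}(t+h) − Â^{(μ)}‖_{L(V,E)} dt = 0 uniformly with respect to h≥0. For μ∈P and λ>0 let {R^{(μ,λ)}(t,s)}_{t≥s≥0} be the evolution system determined by the family {A^{(μ)}(t/λ)}_{t≥0}. Then: (a) ‖R^{(μ,λ)}(t,s)‖ ≤ M e^{ω(t−s)} for all 0≤s≤t, μ∈P, λ>0; and (b) for every t≥0, s∈[0,t], μ∈P and ū∈E, lim_{λ→0⁺, v̄→ū, ν→μ} R^{(ν,λ)}(t,s)v̄ = Ŝ^{(μ)}(t−s)ū, where the convergence is uniform for t and s from bounded intervals. -/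

import Mathlib

open MeasureTheory Filter Set Topology

/-- An evolution system on a Banach space `E`. -/
def IsEvolutionSystem {E : Type*} [NormedAddCommGroup E] [NormedSpace ℝ E]
    (R : ℝ → ℝ → E →L[ℝ] E) : Prop :=
  (∀ t : ℝ, 0 ≤ t → R t t = ContinuousLinearMap.id ℝ E) ∧
  (∀ t s r : ℝ, 0 ≤ r → r ≤ s → s ≤ t → (R t s).comp (R s r) = R t r) ∧
  (∀ u : E, ContinuousOn (fun p : ℝ × ℝ => R p.1 p.2 u) {p : ℝ × ℝ | 0 ≤ p.2 ∧ p.2 ≤ p.1})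

/-- A `C₀` semigroup of bounded linear operators on `E`. -/
def IsC0Semigroup {E : Type*} [NormedAddCommGroup E] [NormedSpace ℝ E]
    (S : ℝ → E →L[ℝ] E) : Prop :=
  S 0 = ContinuousLinearMap.id ℝ E ∧
  (∀ t s : ℝ, 0 ≤ t → 0 ≤ s → S (t + s) = (S t).comp (S s)) ∧
  (∀ u : E, ContinuousOn (fun t : ℝ => S t u) (Set.Ici 0))

/-- The composition `S(t_{n-1})(s_{n-1}) ∘ ⋯ ∘ S(t_0)(s_0)` of members of a two-parameter
family of operators. -/
def prodOps {E : Type*} [NormedAddCommGroup E] [NormedSpace ℝ E]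
    (S : ℝ → ℝ → E →L[ℝ] E) (t s : ℕ → ℝ) : ℕ → E →L[ℝ] E
  | 0 => ContinuousLinearMap.id ℝ E
  | n + 1 => (S (t n) (s n)).comp (prodOps S t s n)

/-- Stability of a family `{S(t)}_{t ≥ 0}` of semigroups with constants `M`, `ω`:
`‖S(tₙ)(sₙ) ⋯ S(t₁)(s₁)‖ ≤ M e^{ω(s₁+⋯+sₙ)}` for `0 ≤ t₁ ≤ ⋯ ≤ tₙ` and `sᵢ ≥ 0`. -/
def IsStableFamily {E : Type*} [NormedAddCommGroup E] [NormedSpace ℝ E]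
    (S : ℝ → ℝ → E →L[ℝ] E) (M ω : ℝ) : Prop :=
  ∀ (n : ℕ) (t s : ℕ → ℝ), (∀ i, 0 ≤ t i) → (∀ i j, i ≤ j → t i ≤ t j) → (∀ i, 0 ≤ s i) →
    ‖prodOps S t s n‖ ≤ M * Real.exp (ω * ∑ i ∈ Finset.range n, s i)

/-- The hyperbolic (Kato) conditions (Hyp1)–(Hyp3) for a family `{A(t)}_{t≥0}` of generators,
relative to a continuous dense embedding `ι : V → E`. Here `S t` is the `C₀` semigroup on `E`
generated by `A(t)`, `SV t` is its restriction to `V` (admissibility), and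
`A t : V →L[ℝ] E` is the restriction of `A(t)` to `V` (so that `V ⊆ D(A(t))`). -/
structure IsHyperbolicFamily {V E : Type*}
    [NormedAddCommGroup V] [NormedSpace ℝ V]
    [NormedAddCommGroup E] [NormedSpace ℝ E]
    (iota : V →L[ℝ] E) (A : ℝ → (V →L[ℝ] E))
    (S : ℝ → ℝ → E →L[ℝ] E) (SV : ℝ → ℝ → V →L[ℝ] V)
    (M om MV omV : ℝ) : Prop where
  /-- (Hyp1): each `S t` is a `C₀` semigroup on `E`. -/
  sem_E : ∀ t : ℝ, 0 ≤ t → IsC0Semigroup (S t)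
  /-- (Hyp1)/(Hyp3): `A(t)v` is the generator of `S t` applied to `v ∈ V`. -/
  gen_on_V : ∀ t : ℝ, 0 ≤ t → ∀ v : V,
    Filter.Tendsto (fun h : ℝ => h⁻¹ • (S t h (iota v) - iota v)) (nhdsWithin 0 (Set.Ioi 0))
      (nhds (A t v))
  /-- (Hyp1): stability on `E` with constants `M`, `ω`. -/
  stable_E : IsStableFamily S M om
  /-- (Hyp2): each restricted semigroup `SV t` is a `C₀` semigroup on `V`. -/
  sem_V : ∀ t : ℝ, 0 ≤ t → IsC0Semigroup (SV t)
  /-- (Hyp2): `V` is `A(t)`-admissible, `SV t` being the restriction of `S t` to `V`. -/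
  compat : ∀ t h : ℝ, 0 ≤ t → 0 ≤ h → ∀ v : V, iota (SV t h v) = S t h (iota v)
  /-- (Hyp2): stability on `V` with constants `M_V`, `ω_V`. -/
  stable_V : IsStableFamily SV MV omV
  /-- (Hyp3): `t ↦ A(t) ∈ L(V,E)` is norm continuous on `[0,∞)`. -/
  contA : ContinuousOn A (Set.Ici 0)

/-- `R` is the evolution system determined by the hyperbolic family `{A(t)}` (with
restriction data `ι`, constants `M`, `ω`): an evolution system satisfying the exponential
bound, the forward derivative identity at `t = s` and the backward derivative identity
on `V`. -/
def IsDeterminedEvolutionSystem {V E : Type*}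
    [NormedAddCommGroup V] [NormedSpace ℝ V]
    [NormedAddCommGroup E] [NormedSpace ℝ E]
    (iota : V →L[ℝ] E) (A : ℝ → (V →L[ℝ] E)) (M om : ℝ)
    (R : ℝ → ℝ → E →L[ℝ] E) : Prop :=
  IsEvolutionSystem R ∧
  (∀ t s : ℝ, 0 ≤ s → s ≤ t → ‖R t s‖ ≤ M * Real.exp (om * (t - s))) ∧
  (∀ s : ℝ, 0 ≤ s → ∀ v : V,
    Filter.Tendsto (fun h : ℝ => h⁻¹ • (R (s + h) s (iota v) - iota v))
      (nhdsWithin 0 (Set.Ioi 0)) (nhds (A s v))) ∧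
  (∀ t : ℝ, ∀ v : V, ∀ s ∈ Set.Icc (0:ℝ) t,
    HasDerivWithinAt (fun σ : ℝ => R t σ (iota v)) (-(R t s (A s v))) (Set.Icc 0 t) s)


private lemma tendsto_clm_apply_aux {X Y : Type*} [NormedAddCommGroup X] [NormedSpace ℝ X]
    [NormedAddCommGroup Y] [NormedSpace ℝ Y]
    {l : Filter ℝ} {B : ℝ → X →L[ℝ] Y} {u : ℝ → X} {L : X} {y : Y} {C : ℝ}
    (hC : ∀ᶠ σ in l, ‖B σ‖ ≤ C)
    (hB : Tendsto (fun σ => B σ L) l (𝓝 y))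
    (hu : Tendsto u l (𝓝 L)) :
    Tendsto (fun σ => B σ (u σ)) l (𝓝 y) := by
  have h0 : Tendsto (fun σ => B σ (u σ) - B σ L) l (𝓝 0) := by
    apply squeeze_zero_norm' (a := fun σ => C * ‖u σ - L‖)
    · filter_upwards [hC] with σ hσ
      calc ‖B σ (u σ) - B σ L‖ = ‖B σ (u σ - L)‖ := by rw [map_sub]
        _ ≤ ‖B σ‖ * ‖u σ - L‖ := (B σ).le_opNorm _
        _ ≤ C * ‖u σ - L‖ := mul_le_mul_of_nonneg_right hσ (norm_nonneg _)
    · have h1 : Tendsto (fun σ => u σ - L) l (𝓝 0) := by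
        simpa using hu.sub (tendsto_const_nhds (x := L))
      simpa using (h1.norm.const_mul C)
  simpa using h0.add hB

private lemma c0_bound {X : Type*} [NormedAddCommGroup X] [NormedSpace ℝ X] [CompleteSpace X]
    {S : ℝ → X →L[ℝ] X} (hS : IsC0Semigroup S) (T : ℝ) :
    ∃ C : ℝ, 0 ≤ C ∧ ∀ r ∈ Icc (0:ℝ) T, ‖S r‖ ≤ C := by
  have key : ∀ x : X, ∃ C, ∀ i : (Icc (0:ℝ) T), ‖S i x‖ ≤ C := by
    intro x
    obtain ⟨C, hC⟩ := isCompact_Icc.exists_bound_of_continuousOn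
      ((hS.2.2 x).mono Icc_subset_Ici_self)
    exact ⟨C, fun i => hC i i.2⟩
  obtain ⟨C, hC⟩ := banach_steinhaus key
  exact ⟨max C 0, le_max_right _ _, fun r hr => le_trans (hC ⟨r, hr⟩) (le_max_left _ _)⟩

set_option maxHeartbeats 2000000 in
/-- Theorem 3.4 (linear averaging principle for hyperbolic evolution systems): if the
time averages of `A^{(ν)}(·+h)` converge to `Â^{(μ)}` in `L(V,E)` (uniformly in `h ≥ 0`),
then the evolution systems `R^{(μ,λ)}` determined by `{A^{(μ)}(t/λ)}` satisfy the uniform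
bound `M e^{ω(t−s)}` and converge strongly to the semigroup `Ŝ^{(μ)}`, uniformly for
`t, s` from bounded intervals. -/
theorem linear_averaging_hyperbolic
    {V E : Type*} [NormedAddCommGroup V] [NormedSpace ℝ V] [CompleteSpace V]
    [NormedAddCommGroup E] [NormedSpace ℝ E] [CompleteSpace E]
    {P : Type*} [MetricSpace P]
    (iota : V →L[ℝ] E) (hinj : Function.Injective iota) (hdense : DenseRange iota)
    (A : P → ℝ → (V →L[ℝ] E)) (S : P → ℝ → ℝ → E →L[ℝ] E) (SV : P → ℝ → ℝ → V →L[ℝ] V)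
    (M om MV omV : ℝ) (hM : 1 ≤ M) (hMV : 1 ≤ MV)
    (hhyp : ∀ μ : P, IsHyperbolicFamily iota (A μ) (S μ) (SV μ) M om MV omV)
    -- the limit generators Â^{(μ)} with their C₀ semigroups; V is Â^{(μ)}-admissible
    -- and V ⊆ D(Â^{(μ)}), `Ahat μ` being the restriction of Â^{(μ)} to V
    (Shat : P → ℝ → E →L[ℝ] E) (hShat : ∀ μ : P, IsC0Semigroup (Shat μ))
    (SVhat : P → ℝ → V →L[ℝ] V) (hSVhat : ∀ μ : P, IsC0Semigroup (SVhat μ))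
    (hcompat : ∀ (μ : P) (h : ℝ), 0 ≤ h → ∀ v : V, iota (SVhat μ h v) = Shat μ h (iota v))
    (Ahat : P → (V →L[ℝ] E))
    (hgen : ∀ (μ : P) (v : V),
      Tendsto (fun h : ℝ => h⁻¹ • (Shat μ h (iota v) - iota v)) (𝓝[>] 0) (𝓝 (Ahat μ v)))
    -- the averaging hypothesis (3.2)
    (havg : ∀ μ : P, ∀ ε > (0:ℝ), ∃ T₀ > (0:ℝ), ∃ δ > (0:ℝ), ∀ T : ℝ, T₀ ≤ T →
      ∀ ν : P, dist ν μ ≤ δ → ∀ h : ℝ, 0 ≤ h →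
        (1 / T) * (∫ r in (0:ℝ)..T, ‖A ν (r + h) - Ahat μ‖) ≤ ε)
    -- the evolution systems determined by the rescaled families {A^{(μ)}(t/λ)}
    (Rlam : P → ℝ → ℝ → ℝ → E →L[ℝ] E)
    (hRlam : ∀ (μ : P) (lam : ℝ), 0 < lam →
      IsDeterminedEvolutionSystem iota (fun r => A μ (r / lam)) M om (Rlam μ lam)) :
    -- (a) the uniform exponential bound
    (∀ (μ : P) (lam : ℝ), 0 < lam → ∀ t s : ℝ, 0 ≤ s → s ≤ t →
      ‖Rlam μ lam t s‖ ≤ M * Real.exp (om * (t - s))) ∧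
    -- (b) the strong convergence to the averaged semigroup
    (∀ (μ : P) (u0 : E) (T : ℝ), 0 < T → ∀ ε > (0:ℝ), ∃ δ > (0:ℝ),
      ∀ (ν : P) (lam : ℝ) (v : E), dist ν μ < δ → 0 < lam → lam < δ → ‖v - u0‖ < δ →
        ∀ t s : ℝ, 0 ≤ s → s ≤ t → t ≤ T →
          ‖Rlam ν lam t s v - Shat μ (t - s) u0‖ ≤ ε) := by
  
  constructor
  · intro μ lam hlam t s hs hst
    exact (hRlam μ lam hlam).2.1 t s hs hst
  · intro μ u0 T hT ε hε
    obtain ⟨CS, hCS0, hCS⟩ := c0_bound (hShat μ) T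
    set CR : ℝ := M * Real.exp (|om| * T) with hCRdef
    have hM0 : (0:ℝ) < M := lt_of_lt_of_le one_pos hM
    have hCR1 : 1 ≤ CR := by
      have h1 : (1:ℝ) ≤ Real.exp (|om| * T) := Real.one_le_exp (by positivity)
      nlinarith
    have hCR0 : (0:ℝ) < CR := lt_of_lt_of_le one_pos hCR1
    have hRbound : ∀ (ν : P) (lam : ℝ), 0 < lam → ∀ t' σ : ℝ, 0 ≤ σ → σ ≤ t' → t' ≤ T →
        ‖Rlam ν lam t' σ‖ ≤ CR := by
      intro ν lam hlam t' σ hσ hσt' ht'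
      refine le_trans ((hRlam ν lam hlam).2.1 t' σ hσ hσt') ?_
      have hexp : om * (t' - σ) ≤ |om| * T := by
        calc om * (t' - σ) ≤ |om| * (t' - σ) :=
              mul_le_mul_of_nonneg_right (le_abs_self om) (by linarith)
          _ ≤ |om| * T := mul_le_mul_of_nonneg_left (by linarith) (abs_nonneg om)
      exact mul_le_mul_of_nonneg_left (Real.exp_le_exp.mpr hexp) hM0.le
    have hden : (0:ℝ) < 4 * (CR + CS + 1) := by nlinarith
    set η : ℝ := ε / (4 * (CR + CS + 1)) with hηdef
    have hη0 : 0 < η := div_pos hε hden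
    obtain ⟨v, hv⟩ := hdense.exists_dist_lt u0 hη0
    have hvnorm : ‖iota v - u0‖ < η := by rw [← dist_eq_norm, dist_comm]; exact hv
    obtain ⟨K0, hK0⟩ := isCompact_Icc.exists_bound_of_continuousOn
      (((hSVhat μ).2.2 v).mono (Icc_subset_Ici_self : Icc (0:ℝ) T ⊆ Ici 0))
    set K : ℝ := max K0 0 with hKdef
    have hKnn : 0 ≤ K := le_max_right _ _
    have hKb : ∀ r ∈ Icc (0:ℝ) T, ‖SVhat μ r v‖ ≤ K :=
      fun r hr => le_trans (hK0 r hr) (le_max_left _ _)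
    set D : ℝ := 2 * (CR * ((K + 1) * (T + 1))) with hDdef
    have hD0 : 0 < D := by
      rw [hDdef]
      have : 0 < (K + 1) * (T + 1) := mul_pos (by linarith) (by linarith)
      nlinarith
    set ε' : ℝ := ε / D with hε'def
    have hε'0 : 0 < ε' := div_pos hε hD0
    obtain ⟨T₀, hT₀, δ₀, hδ₀, havg'⟩ := havg μ ε' hε'0
    refine ⟨min δ₀ (min (1 / T₀) η), lt_min hδ₀ (lt_min (by positivity) hη0), ?_⟩
    intro ν lam vbar hνdist hlam hlamδ hvbar t s hs hst htT
    have hνδ₀ : dist ν μ ≤ δ₀ := le_trans hνdist.le (min_le_left _ _)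
    have hlamT₀ : lam * T₀ ≤ 1 := by
      have h1 : lam ≤ 1 / T₀ :=
        le_trans hlamδ.le (le_trans (min_le_right _ _) (min_le_left _ _))
      rw [le_div_iff₀ hT₀] at h1; linarith
    have hsT : s ≤ T := le_trans hst htT
    have hts0 : 0 ≤ t - s := by linarith
    have htsT : t - s ≤ T := by linarith
    have ht0 : 0 ≤ t := le_trans hs hst
    have hR := hRlam ν lam hlam
    set R' : ℝ → ℝ → E →L[ℝ] E := Rlam ν lam with hR'def
    set w : ℝ → V := fun σ => SVhat μ (σ - s) v with hwdef
    set f : ℝ → E := fun σ => R' t σ (iota (w σ)) with hfdef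
    have hwmem : ∀ σ ∈ Icc s t, σ - s ∈ Icc (0:ℝ) T :=
      fun σ hσ => ⟨by linarith [hσ.1], by linarith [hσ.2]⟩
    have hwK : ∀ σ ∈ Icc s t, ‖w σ‖ ≤ K := fun σ hσ => hKb _ (hwmem σ hσ)
    have hwiota : ∀ σ, s ≤ σ → iota (w σ) = Shat μ (σ - s) (iota v) :=
      fun σ hσ => hcompat μ _ (by linarith) v
    have hwcont : ContinuousOn w (Icc s t) := by
      have := ((hSVhat μ).2.2 v).comp
        ((continuous_id.sub continuous_const).continuousOn (s := Icc s t))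
        (fun σ (hσ : σ ∈ Icc s t) => sub_nonneg.mpr hσ.1)
      exact this
    have hRcont : ∀ x : E, ContinuousOn (fun σ => R' t σ x) (Icc s t) := by
      intro x
      have hc : ContinuousOn (fun σ : ℝ => ((t, σ) : ℝ × ℝ)) (Icc s t) :=
        (continuous_const.prodMk continuous_id).continuousOn
      exact (hR.1.2.2 x).comp hc
        (fun σ (hσ : σ ∈ Icc s t) => ⟨le_trans hs hσ.1, hσ.2⟩)
    have hcomm : ∀ r : ℝ, 0 ≤ r → Shat μ r (Ahat μ v) = Ahat μ (SVhat μ r v) := by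
      intro r hr
      have h1 := hgen μ (SVhat μ r v)
      have h2 : Tendsto (fun h : ℝ => h⁻¹ • (Shat μ h (iota (SVhat μ r v)) - iota (SVhat μ r v)))
          (𝓝[>] (0:ℝ)) (𝓝 (Shat μ r (Ahat μ v))) := by
        have hcomp : Tendsto (fun h : ℝ => Shat μ r (h⁻¹ • (Shat μ h (iota v) - iota v)))
            (𝓝[>] (0:ℝ)) (𝓝 (Shat μ r (Ahat μ v))) :=
          ((Shat μ r).continuous.tendsto _).comp (hgen μ v)
        refine Tendsto.congr' ?_ hcomp
        filter_upwards [self_mem_nhdsWithin] with h hh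
        have hh0 : (0:ℝ) ≤ h := le_of_lt hh
        have e1 : iota (SVhat μ r v) = Shat μ r (iota v) := hcompat μ r hr v
        have e2 : Shat μ h (Shat μ r (iota v)) = Shat μ r (Shat μ h (iota v)) := by
          have c1 := (hShat μ).2.1 h r hh0 hr
          have c2 := (hShat μ).2.1 r h hr hh0
          calc Shat μ h (Shat μ r (iota v)) = Shat μ (h + r) (iota v) := by rw [c1]; rfl
            _ = Shat μ (r + h) (iota v) := by rw [add_comm]
            _ = Shat μ r (Shat μ h (iota v)) := by rw [c2]; rfl
        rw [_root_.map_smul, _root_.map_sub, e1, e2]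
      exact tendsto_nhds_unique h2 h1
    have hSderiv : ∀ σ ∈ Icc s t,
        HasDerivWithinAt (fun σ' => iota (w σ')) (Ahat μ (w σ)) (Icc s t) σ := by
      intro σ hσ
      have hσ0 : 0 ≤ σ - s := sub_nonneg.mpr hσ.1
      have hright : HasDerivWithinAt (fun σ' => iota (w σ')) (Ahat μ (w σ)) (Icc σ t) σ := by
        rw [hasDerivWithinAt_iff_tendsto_slope]
        have hmap : Tendsto (fun σ' => σ' - σ) (𝓝[Icc σ t \ {σ}] σ) (𝓝[>] (0:ℝ)) := by
          apply tendsto_nhdsWithin_of_tendsto_nhds_of_eventually_within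
          · have h0 : Tendsto (fun σ' : ℝ => σ' - σ) (𝓝 σ) (𝓝 (σ - σ)) :=
              (continuous_id.sub continuous_const).tendsto σ
            simpa using h0.mono_left nhdsWithin_le_nhds
          · filter_upwards [self_mem_nhdsWithin] with σ' hσ'
            have hlt : σ < σ' := lt_of_le_of_ne hσ'.1.1 (fun h => hσ'.2 h.symm)
            exact sub_pos.mpr hlt
        refine Tendsto.congr' ?_ ((hgen μ (w σ)).comp hmap)
        filter_upwards [self_mem_nhdsWithin] with σ' hσ'
        simp only [Function.comp_apply]
        rw [slope_def_module]
        have e : iota (w σ') = Shat μ (σ' - σ) (iota (w σ)) := by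
          rw [hwiota σ' (le_trans hσ.1 hσ'.1.1), hwiota σ hσ.1]
          have hsplit : σ' - s = (σ' - σ) + (σ - s) := by ring
          rw [hsplit, (hShat μ).2.1 (σ' - σ) (σ - s) (by linarith [hσ'.1.1]) hσ0]
          rfl
        rw [e]
      have hleft : HasDerivWithinAt (fun σ' => iota (w σ')) (Ahat μ (w σ)) (Icc s σ) σ := by
        rw [hasDerivWithinAt_iff_tendsto_slope]
        have hmapIci : Tendsto (fun σ' => σ' - s) (𝓝[Icc s σ \ {σ}] σ) (𝓝[Ici 0] (σ - s)) := by
          apply tendsto_nhdsWithin_of_tendsto_nhds_of_eventually_within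
          · exact ((continuous_id.sub continuous_const).tendsto σ).mono_left nhdsWithin_le_nhds
          · filter_upwards [self_mem_nhdsWithin] with σ' hσ'
            exact sub_nonneg.mpr hσ'.1.1
        have hmap2 : Tendsto (fun σ' => σ - σ') (𝓝[Icc s σ \ {σ}] σ) (𝓝[>] (0:ℝ)) := by
          apply tendsto_nhdsWithin_of_tendsto_nhds_of_eventually_within
          · have h0 : Tendsto (fun σ' : ℝ => σ - σ') (𝓝 σ) (𝓝 (σ - σ)) :=
              (continuous_const.sub continuous_id).tendsto σ
            simpa using h0.mono_left nhdsWithin_le_nhds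
          · filter_upwards [self_mem_nhdsWithin] with σ' hσ'
            have hlt : σ' < σ := lt_of_le_of_ne hσ'.1.2 hσ'.2
            exact sub_pos.mpr hlt
        have hBtend : Tendsto (fun σ' => Shat μ (σ' - s) (Ahat μ v)) (𝓝[Icc s σ \ {σ}] σ)
            (𝓝 (Shat μ (σ - s) (Ahat μ v))) :=
          (((hShat μ).2.2 (Ahat μ v)) (σ - s) hσ0).tendsto.comp hmapIci
        have hqu : Tendsto (fun σ' => (σ - σ')⁻¹ • (Shat μ (σ - σ') (iota v) - iota v))
            (𝓝[Icc s σ \ {σ}] σ) (𝓝 (Ahat μ v)) := (hgen μ v).comp hmap2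
        have hCb : ∀ᶠ σ' in 𝓝[Icc s σ \ {σ}] σ, ‖Shat μ (σ' - s)‖ ≤ CS := by
          filter_upwards [self_mem_nhdsWithin] with σ' hσ'
          exact hCS _ ⟨sub_nonneg.mpr hσ'.1.1, by linarith [hσ'.1.2, hσ.2]⟩
        have hmain := tendsto_clm_apply_aux hCb hBtend hqu
        have hval : Shat μ (σ - s) (Ahat μ v) = Ahat μ (w σ) := hcomm (σ - s) hσ0
        rw [hval] at hmain
        refine Tendsto.congr' ?_ hmain
        filter_upwards [self_mem_nhdsWithin] with σ' hσ'
        rw [slope_def_module]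
        have h1 : iota (w σ') = Shat μ (σ' - s) (iota v) := hwiota σ' hσ'.1.1
        have h2 : iota (w σ) = Shat μ (σ - s) (iota v) := hwiota σ hσ.1
        have h3 : Shat μ (σ - s) (iota v) = Shat μ (σ' - s) (Shat μ (σ - σ') (iota v)) := by
          have hsplit : σ - s = (σ' - s) + (σ - σ') := by ring
          rw [hsplit, (hShat μ).2.1 (σ' - s) (σ - σ') (sub_nonneg.mpr hσ'.1.1)
            (sub_nonneg.mpr hσ'.1.2)]
          rfl
        rw [_root_.map_smul, _root_.map_sub, h1, h2, h3]
        have hns : σ' - σ = -(σ - σ') := by ring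
        rw [hns, inv_neg, neg_smul, ← smul_neg, neg_sub]
      have hu := hleft.union hright
      rwa [Icc_union_Icc_eq_Icc hσ.1 hσ.2] at hu
    have hfderiv : ∀ σ ∈ Icc s t,
        HasDerivWithinAt f (R' t σ ((Ahat μ - A ν (σ / lam)) (w σ))) (Icc s t) σ := by
      intro σ hσ
      have h1 : HasDerivWithinAt (fun σ' => R' t σ' (iota (w σ)))
          (-(R' t σ (A ν (σ / lam) (w σ)))) (Icc s t) σ :=
        (hR.2.2.2 t (w σ) σ ⟨le_trans hs hσ.1, hσ.2⟩).mono (Icc_subset_Icc hs le_rfl)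
      have h2 : Tendsto (fun σ' => R' t σ' ((σ' - σ)⁻¹ • (iota (w σ') - iota (w σ))))
          (𝓝[Icc s t \ {σ}] σ) (𝓝 (R' t σ (Ahat μ (w σ)))) := by
        apply tendsto_clm_apply_aux (C := CR) (B := fun σ' => R' t σ') (L := Ahat μ (w σ))
        · filter_upwards [self_mem_nhdsWithin] with σ' hσ'
          exact hRbound ν lam hlam t σ' (le_trans hs hσ'.1.1) hσ'.1.2 htT
        · exact ((hRcont (Ahat μ (w σ)) σ hσ).tendsto).mono_left
            (nhdsWithin_mono σ diff_subset)
        · have hsl := hasDerivWithinAt_iff_tendsto_slope.mp (hSderiv σ hσ)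
          refine Tendsto.congr' ?_ hsl
          filter_upwards with σ'
          rw [slope_def_module]
      rw [hasDerivWithinAt_iff_tendsto_slope] at h1 ⊢
      have hsum := h1.add h2
      have hlim : -(R' t σ (A ν (σ / lam) (w σ))) + R' t σ (Ahat μ (w σ))
          = R' t σ ((Ahat μ - A ν (σ / lam)) (w σ)) := by
        rw [ContinuousLinearMap.sub_apply, map_sub]; abel
      rw [hlim] at hsum
      refine Tendsto.congr' ?_ hsum
      filter_upwards with σ'
      rw [slope_def_module, slope_def_module, _root_.map_smul, _root_.map_sub, ← smul_add]
      congr 1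
      abel
    have hfcont : ContinuousOn f (Icc s t) := fun σ hσ => (hfderiv σ hσ).continuousWithinAt
    set g : ℝ → E := fun σ => R' t σ ((Ahat μ - A ν (σ / lam)) (w σ)) with hgdef
    have hAνcont : ContinuousOn (fun σ : ℝ => A ν (σ / lam)) (Icc s t) := by
      apply ((hhyp ν).contA).comp ((continuous_id.div_const lam).continuousOn)
      intro σ hσ
      exact div_nonneg (le_trans hs hσ.1) hlam.le
    have hveccont : ContinuousOn (fun σ => (Ahat μ - A ν (σ / lam)) (w σ)) (Icc s t) :=
      (continuousOn_const.sub hAνcont).clm_apply hwcont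
    have hgcont : ContinuousOn g (Icc s t) := by
      intro σ hσ
      exact tendsto_clm_apply_aux (C := CR) (B := fun σ' => R' t σ')
        (by filter_upwards [self_mem_nhdsWithin] with σ' hσ'
            exact hRbound ν lam hlam t σ' (le_trans hs hσ'.1) hσ'.2 htT)
        ((hRcont _ σ hσ).tendsto) ((hveccont σ hσ).tendsto)
    have hgint : IntervalIntegrable g volume s t := by
      apply ContinuousOn.intervalIntegrable
      rwa [uIcc_of_le hst]
    have hftc : ∫ σ in s..t, g σ = f t - f s :=
      intervalIntegral.integral_eq_sub_of_hasDeriv_right_of_le hst hfcont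
        (fun x hx => (hfderiv x ⟨hx.1.le, hx.2.le⟩).mono_of_mem_nhdsWithin
          (mem_of_superset (Ioc_mem_nhdsGT_of_mem ⟨le_refl x, hx.2⟩)
            (fun y hy => ⟨le_trans hx.1.le hy.1.le, hy.2⟩)))
        hgint
    set F : ℝ → ℝ := fun r => ‖A ν r - Ahat μ‖ with hFdef
    have hFcont : ContinuousOn F (Ici 0) := ((hhyp ν).contA.sub continuousOn_const).norm
    have hFlcont : ContinuousOn (fun σ => F (σ / lam)) (Icc s t) := by
      apply hFcont.comp ((continuous_id.div_const lam).continuousOn)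
      intro σ hσ
      exact div_nonneg (le_trans hs hσ.1) hlam.le
    have hFlint : IntervalIntegrable (fun σ => F (σ / lam)) volume s t := by
      apply ContinuousOn.intervalIntegrable
      rwa [uIcc_of_le hst]
    have hmain : ‖f t - f s‖ ≤ CR * K * ∫ σ in s..t, F (σ / lam) := by
      rw [← hftc]
      calc ‖∫ σ in s..t, g σ‖ ≤ ∫ σ in s..t, ‖g σ‖ :=
            intervalIntegral.norm_integral_le_integral_norm hst
        _ ≤ ∫ σ in s..t, CR * K * F (σ / lam) := by
            apply intervalIntegral.integral_mono_on hst
            · apply ContinuousOn.intervalIntegrable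
              rw [uIcc_of_le hst]; exact hgcont.norm
            · apply ContinuousOn.intervalIntegrable
              rw [uIcc_of_le hst]; exact (hFlcont.const_smul (CR * K)).congr (fun x _ => by
                simp [smul_eq_mul])
            · intro x hx
              have hb1 : ‖g x‖ ≤ CR * ‖(Ahat μ - A ν (x / lam)) (w x)‖ :=
                le_trans ((R' t x).le_opNorm _) (mul_le_mul_of_nonneg_right
                  (hRbound ν lam hlam t x (le_trans hs hx.1) hx.2 htT) (norm_nonneg _))
              have hb2 : ‖(Ahat μ - A ν (x / lam)) (w x)‖ ≤ F (x / lam) * K := by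
                calc ‖(Ahat μ - A ν (x / lam)) (w x)‖
                    ≤ ‖Ahat μ - A ν (x / lam)‖ * ‖w x‖ := ContinuousLinearMap.le_opNorm _ _
                  _ ≤ ‖Ahat μ - A ν (x / lam)‖ * K :=
                      mul_le_mul_of_nonneg_left (hwK x hx) (norm_nonneg _)
                  _ = F (x / lam) * K := by rw [hFdef]; rw [norm_sub_rev]
              calc ‖g x‖ ≤ CR * (F (x / lam) * K) :=
                    le_trans hb1 (mul_le_mul_of_nonneg_left hb2 hCR0.le)
                _ = CR * K * F (x / lam) := by ring
        _ = CR * K * ∫ σ in s..t, F (σ / lam) := intervalIntegral.integral_const_mul _ _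
    set τ : ℝ := (t - s) / lam with hτdef
    have hτ0 : 0 ≤ τ := div_nonneg hts0 hlam.le
    have hsl0 : 0 ≤ s / lam := div_nonneg hs hlam.le
    have hFshift : ContinuousOn (fun r => F (r + s / lam)) (Ici 0) := by
      apply hFcont.comp ((continuous_id.add continuous_const).continuousOn)
      intro r hr
      exact add_nonneg hr hsl0
    have hIeq : ∫ σ in s..t, F (σ / lam) = lam * ∫ r in (0:ℝ)..τ, F (r + s / lam) := by
      have e2 : ∫ r in (0:ℝ)..τ, F (r + s / lam) = ∫ r in (s / lam)..(t / lam), F r := by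
        rw [intervalIntegral.integral_comp_add_right (fun r => F r) (s / lam)]
        congr 1
        · simp
        · rw [hτdef, ← add_div, sub_add_cancel]
      rw [intervalIntegral.integral_comp_div (fun r => F r) (ne_of_gt hlam), e2, smul_eq_mul]
    have hIbound : lam * ∫ r in (0:ℝ)..τ, F (r + s / lam) ≤ ε' * (T + 1) := by
      rcases le_or_gt T₀ τ with hc | hc
      · have h1 := havg' τ hc ν hνδ₀ (s / lam) hsl0
        have hτpos : 0 < τ := lt_of_lt_of_le hT₀ hc
        have h2 : ∫ r in (0:ℝ)..τ, F (r + s / lam) ≤ ε' * τ := by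
          have h3 := mul_le_mul_of_nonneg_left h1 hτpos.le
          calc ∫ r in (0:ℝ)..τ, F (r + s / lam)
              = τ * (1 / τ * ∫ r in (0:ℝ)..τ, F (r + s / lam)) := by
                  rw [← mul_assoc, mul_one_div_cancel hτpos.ne', one_mul]
            _ ≤ τ * ε' := h3
            _ = ε' * τ := mul_comm _ _
        calc lam * ∫ r in (0:ℝ)..τ, F (r + s / lam) ≤ lam * (ε' * τ) :=
              mul_le_mul_of_nonneg_left h2 hlam.le
          _ = ε' * (t - s) := by rw [hτdef]; field_simp
          _ ≤ ε' * (T + 1) := mul_le_mul_of_nonneg_left (by linarith) hε'0.le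
      · have h1 := havg' T₀ le_rfl ν hνδ₀ (s / lam) hsl0
        have hint0 : IntervalIntegrable (fun r => F (r + s / lam)) volume 0 T₀ := by
          apply ContinuousOn.intervalIntegrable
          apply hFshift.mono
          rw [uIcc_of_le hT₀.le]
          exact Icc_subset_Ici_self
        have h2 : ∫ r in (0:ℝ)..τ, F (r + s / lam) ≤ ∫ r in (0:ℝ)..T₀, F (r + s / lam) :=
          intervalIntegral.integral_mono_interval le_rfl hτ0 hc.le
            (MeasureTheory.ae_of_all _ fun r => norm_nonneg _) hint0
        have h3 : ∫ r in (0:ℝ)..T₀, F (r + s / lam) ≤ ε' * T₀ := by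
          have h4 := mul_le_mul_of_nonneg_left h1 hT₀.le
          calc ∫ r in (0:ℝ)..T₀, F (r + s / lam)
              = T₀ * (1 / T₀ * ∫ r in (0:ℝ)..T₀, F (r + s / lam)) := by
                  rw [← mul_assoc, mul_one_div_cancel hT₀.ne', one_mul]
            _ ≤ T₀ * ε' := h4
            _ = ε' * T₀ := mul_comm _ _
        calc lam * ∫ r in (0:ℝ)..τ, F (r + s / lam) ≤ lam * (ε' * T₀) :=
              mul_le_mul_of_nonneg_left (le_trans h2 h3) hlam.le
          _ = ε' * (lam * T₀) := by ring
          _ ≤ ε' * 1 := mul_le_mul_of_nonneg_left hlamT₀ hε'0.le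
          _ ≤ ε' * (T + 1) := mul_le_mul_of_nonneg_left (by linarith) hε'0.le
    have hfs : f s = R' t s (iota v) := by
      have hws : w s = v := by
        rw [hwdef]
        simp only [sub_self]
        rw [(hSVhat μ).1]
        rfl
      rw [hfdef]
      simp only []
      rw [hws]
    have hft : f t = Shat μ (t - s) (iota v) := by
      have h1 : f t = iota (w t) := by
        rw [hfdef]
        simp only []
        rw [hR.1.1 t ht0]
        rfl
      rw [h1, hwiota t hst]
    have hterm2 : ‖R' t s (iota v) - Shat μ (t - s) (iota v)‖ ≤ ε / 2 := by
      have hfinal : CR * K * (ε' * (T + 1)) ≤ ε / 2 := by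
        have heq : ε' * D = ε := by
          rw [hε'def]
          field_simp
        calc CR * K * (ε' * (T + 1)) = ε' * (CR * (K * (T + 1))) := by ring
          _ ≤ ε' * (CR * ((K + 1) * (T + 1))) := by
              apply mul_le_mul_of_nonneg_left _ hε'0.le
              apply mul_le_mul_of_nonneg_left _ hCR0.le
              apply mul_le_mul_of_nonneg_right (by linarith) (by linarith)
          _ = ε' * D / 2 := by rw [hDdef]; ring
          _ = ε / 2 := by rw [heq]
      calc ‖R' t s (iota v) - Shat μ (t - s) (iota v)‖ = ‖f s - f t‖ := by rw [hfs, hft]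
        _ = ‖f t - f s‖ := norm_sub_rev _ _
        _ ≤ CR * K * ∫ σ in s..t, F (σ / lam) := hmain
        _ ≤ CR * K * (ε' * (T + 1)) := by
            apply mul_le_mul_of_nonneg_left _ (mul_nonneg hCR0.le hKnn)
            rw [hIeq]
            exact hIbound
        _ ≤ ε / 2 := hfinal
    have hterm1 : ‖R' t s (vbar - iota v)‖ ≤ CR * (2 * η) := by
      have hd : ‖vbar - iota v‖ ≤ 2 * η := by
        have e : vbar - iota v = (vbar - u0) + (u0 - iota v) := by abel
        have h1 : ‖vbar - u0‖ ≤ η :=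
          le_trans hvbar.le (le_trans (min_le_right _ _) (min_le_right _ _))
        have h2 : ‖u0 - iota v‖ ≤ η := by rw [norm_sub_rev]; exact hvnorm.le
        calc ‖vbar - iota v‖ = ‖(vbar - u0) + (u0 - iota v)‖ := by rw [e]
          _ ≤ ‖vbar - u0‖ + ‖u0 - iota v‖ := norm_add_le _ _
          _ ≤ 2 * η := by linarith
      calc ‖R' t s (vbar - iota v)‖ ≤ ‖R' t s‖ * ‖vbar - iota v‖ := (R' t s).le_opNorm _
        _ ≤ CR * ‖vbar - iota v‖ :=
            mul_le_mul_of_nonneg_right (hRbound ν lam hlam t s hs hst htT) (norm_nonneg _)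
        _ ≤ CR * (2 * η) := mul_le_mul_of_nonneg_left hd hCR0.le
    have hterm3 : ‖Shat μ (t - s) (iota v - u0)‖ ≤ CS * η := by
      calc ‖Shat μ (t - s) (iota v - u0)‖ ≤ ‖Shat μ (t - s)‖ * ‖iota v - u0‖ :=
            (Shat μ (t - s)).le_opNorm _
        _ ≤ CS * η := mul_le_mul (hCS _ ⟨hts0, htsT⟩) hvnorm.le (norm_nonneg _) hCS0
    have hdecomp : Rlam ν lam t s vbar - Shat μ (t - s) u0
        = R' t s (vbar - iota v) + (R' t s (iota v) - Shat μ (t - s) (iota v))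
          + Shat μ (t - s) (iota v - u0) := by
      rw [map_sub, map_sub]
      abel
    have hηsum : CR * (2 * η) + CS * η ≤ ε / 2 := by
      have h1 : (2 * CR + CS) * η ≤ (2 * (CR + CS + 1)) * η :=
        mul_le_mul_of_nonneg_right (by linarith) hη0.le
      have h2 : (2 * (CR + CS + 1)) * η = ε / 2 := by
        rw [hηdef]
        field_simp
        ring
      have h3 : CR * (2 * η) + CS * η = (2 * CR + CS) * η := by ring
      linarith
    calc ‖Rlam ν lam t s vbar - Shat μ (t - s) u0‖
        = ‖R' t s (vbar - iota v) + (R' t s (iota v) - Shat μ (t - s) (iota v))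
            + Shat μ (t - s) (iota v - u0)‖ := by rw [hdecomp]
      _ ≤ ‖R' t s (vbar - iota v)‖ + ‖R' t s (iota v) - Shat μ (t - s) (iota v)‖
            + ‖Shat μ (t - s) (iota v - u0)‖ := norm_add₃_le
      _ ≤ CR * (2 * η) + ε / 2 + CS * η := by
          exact add_le_add (add_le_add hterm1 hterm2) hterm3
      _ ≤ ε := by linarith
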